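/- Let X be a space, D ⊆ X, κ an infinite cardinal with wt(X) ≤ κ, and let 𝒢 be a cover of closure(D) consisting of G^c_κ-sets of X. Then there exists 𝒢' ⊆ 𝒢 with |𝒢'| ≤ |D|^κ covering closure(D). -/

import Mathlib

open Cardinal Set TopologicalSpace

universe u

/-- The tightness `t(X)`: the least infinite cardinal `κ` such that whenever
`x ∈ closure A` there is `B ⊆ A` with `#B ≤ κ` and `x ∈ closure B`. -/
noncomputable def tightness (X : Type u) [TopologicalSpace X] : Cardinal.{u} :=
  sInf {κ : Cardinal.{u} | ℵ₀ ≤ κ ∧ ∀ (A : Set X) (x : X), x ∈ closure A →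
    ∃ B ⊆ A, #B ≤ κ ∧ x ∈ closure B}

/-- The `κ`-closure of a set `A`. -/
noncomputable def clk {X : Type u} [TopologicalSpace X] (κ : Cardinal.{u}) (A : Set X) : Set X :=
  ⋃ (B : Set X) (_ : B ⊆ A ∧ #B ≤ κ), closure B

/-- A cover `𝒞` witnessing that `wt X ≤ κ`. -/
noncomputable def IsWtWitness {X : Type u} [TopologicalSpace X] (κ : Cardinal.{u}) (𝒞 : Set (Set X)) : Prop :=
  ⋃₀ 𝒞 = Set.univ ∧ #𝒞 ≤ 2 ^ κ ∧ ∀ C ∈ 𝒞, tightness ↥C ≤ κ ∧ clk (2 ^ κ) C = Set.univ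

/-- The weak tightness `wt(X)`. -/
noncomputable def wt (X : Type u) [TopologicalSpace X] : Cardinal.{u} :=
  sInf {κ : Cardinal.{u} | ℵ₀ ≤ κ ∧ ∃ 𝒞 : Set (Set X), IsWtWitness κ 𝒞}

/-- The Lindelöf number `L(X)`. -/
noncomputable def LindelofNumber (X : Type u) [TopologicalSpace X] : Cardinal.{u} :=
  sInf {κ : Cardinal.{u} | ℵ₀ ≤ κ ∧ ∀ 𝒰 : Set (Set X), (∀ U ∈ 𝒰, IsOpen U) →
    ⋃₀ 𝒰 = Set.univ → ∃ 𝒱 ⊆ 𝒰, #𝒱 ≤ κ ∧ ⋃₀ 𝒱 = Set.univ}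

/-- The pseudocharacter `ψ(X)`. -/
noncomputable def psi (X : Type u) [TopologicalSpace X] : Cardinal.{u} :=
  sInf {κ : Cardinal.{u} | ℵ₀ ≤ κ ∧ ∀ x : X, ∃ 𝒰 : Set (Set X),
    #𝒰 ≤ κ ∧ (∀ U ∈ 𝒰, IsOpen U ∧ x ∈ U) ∧ ⋂₀ 𝒰 = {x}}

/-- The closed pseudocharacter `ψ_c(X)`. -/
noncomputable def psic (X : Type u) [TopologicalSpace X] : Cardinal.{u} :=
  sInf {κ : Cardinal.{u} | ℵ₀ ≤ κ ∧ ∀ x : X, ∃ 𝒰 : Set (Set X),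
    #𝒰 ≤ κ ∧ (∀ U ∈ 𝒰, IsOpen U ∧ x ∈ U) ∧ (⋂ U ∈ 𝒰, closure U) = {x}}

/-- `A` is `𝒞`-saturated: `A ∩ C` is dense in `A` for every `C ∈ 𝒞`. -/
noncomputable def Saturated {X : Type u} [TopologicalSpace X] (𝒞 : Set (Set X)) (A : Set X) : Prop :=
  ∀ C ∈ 𝒞, A ⊆ closure (A ∩ C)

/-- The π-character `πχ(x, X)` of a point: least cardinality of a local π-base at `x`. -/
noncomputable def piCharPt {X : Type u} [TopologicalSpace X] (x : X) : Cardinal.{u} :=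
  sInf {κ : Cardinal.{u} | ∃ ℬ : Set (Set X), #ℬ ≤ κ ∧
    (∀ B ∈ ℬ, IsOpen B ∧ B.Nonempty) ∧ ∀ U : Set X, IsOpen U → x ∈ U → ∃ B ∈ ℬ, B ⊆ U}

/-- The π-character `πχ(X)`. -/
noncomputable def piChar (X : Type u) [TopologicalSpace X] : Cardinal.{u} :=
  ⨆ x : X, piCharPt x

/-- The character `χ(x, X)` of a point: least cardinality of a local base at `x`. -/
noncomputable def charPt {X : Type u} [TopologicalSpace X] (x : X) : Cardinal.{u} :=
  sInf {κ : Cardinal.{u} | ∃ ℬ : Set (Set X), #ℬ ≤ κ ∧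
    (∀ B ∈ ℬ, IsOpen B ∧ x ∈ B) ∧ ∀ U : Set X, IsOpen U → x ∈ U → ∃ B ∈ ℬ, B ⊆ U}

/-- The character `χ(X)`. -/
noncomputable def character (X : Type u) [TopologicalSpace X] : Cardinal.{u} :=
  ⨆ x : X, charPt x

/-- The density `d(X)`: least cardinality of a dense subset. -/
noncomputable def density (X : Type u) [TopologicalSpace X] : Cardinal.{u} :=
  sInf {κ : Cardinal.{u} | ∃ D : Set X, Dense D ∧ #D ≤ κ}

/-- A space is homogeneous if its homeomorphism group acts transitively. -/
noncomputable def Homogeneous (X : Type u) [TopologicalSpace X] : Prop :=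
  ∀ x y : X, ∃ h : X ≃ₜ X, h x = y

/-- A space is power homogeneous if some (nonempty) power of it is homogeneous. -/
noncomputable def PowerHomogeneous (X : Type u) [TopologicalSpace X] : Prop :=
  ∃ I : Type u, Nonempty I ∧ Homogeneous (I → X)

/-- A `G^c_κ`-set: `G = ⋂𝒰 = ⋂_{U ∈ 𝒰} closure U` for a family `𝒰` of `≤ κ` open sets. -/
noncomputable def GcSet {X : Type u} [TopologicalSpace X] (κ : Cardinal.{u}) (G : Set X) : Prop :=
  ∃ 𝒰 : Set (Set X), #𝒰 ≤ κ ∧ (∀ U ∈ 𝒰, IsOpen U) ∧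
    G = ⋂₀ 𝒰 ∧ G = ⋂ U ∈ 𝒰, closure U

/-- A subset is subseparable if it is contained in the closure of a countable set. -/
noncomputable def Subseparable {X : Type u} [TopologicalSpace X] (A : Set X) : Prop :=
  ∃ c : Set X, c.Countable ∧ A ⊆ closure c


section Stmt9Aux

variable {X : Type u} [TopologicalSpace X]

lemma tightness_spec (Y : Type u) [TopologicalSpace Y] {κ : Cardinal.{u}}
    (h : tightness Y ≤ κ) : ∀ (A : Set Y) (x : Y), x ∈ closure A →
      ∃ B ⊆ A, #B ≤ κ ∧ x ∈ closure B := by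
  have hne : {κ' : Cardinal.{u} | ℵ₀ ≤ κ' ∧ ∀ (A : Set Y) (x : Y), x ∈ closure A →
      ∃ B ⊆ A, #B ≤ κ' ∧ x ∈ closure B}.Nonempty :=
    ⟨#Y + ℵ₀, self_le_add_left _ _, fun A x hx =>
      ⟨A, subset_rfl, (mk_set_le A).trans (self_le_add_right _ _), hx⟩⟩
  have hmem : ℵ₀ ≤ tightness Y ∧ ∀ (A : Set Y) (x : Y), x ∈ closure A →
      ∃ B ⊆ A, #B ≤ tightness Y ∧ x ∈ closure B := csInf_mem hne
  intro A x hx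
  obtain ⟨B, hB1, hB2, hB3⟩ := hmem.2 A x hx
  exact ⟨B, hB1, hB2.trans h, hB3⟩

lemma clk_mono {κ₁ κ₂ : Cardinal.{u}} (h : κ₁ ≤ κ₂) (A : Set X) : clk κ₁ A ⊆ clk κ₂ A := by
  intro x hx
  simp only [clk, mem_iUnion] at hx ⊢
  obtain ⟨B, ⟨h1, h2⟩, h3⟩ := hx
  exact ⟨B, ⟨h1, h2.trans h⟩, h3⟩

lemma exists_wtWitness {κ : Cardinal.{u}} (hwt : wt X ≤ κ) :
    ∃ 𝒞 : Set (Set X), IsWtWitness κ 𝒞 := by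
  have hne : {κ' : Cardinal.{u} | ℵ₀ ≤ κ' ∧ ∃ 𝒞 : Set (Set X), IsWtWitness κ' 𝒞}.Nonempty := by
    set κ₀ : Cardinal.{u} := 2 ^ (#X + ℵ₀) with hκ₀
    have hX : #X ≤ κ₀ := (self_le_add_right _ _).trans (cantor _).le
    have hℵ : ℵ₀ ≤ κ₀ := (self_le_add_left _ _).trans (cantor _).le
    refine ⟨κ₀, hℵ, {Set.univ}, by simp, ?_, ?_⟩
    · rw [mk_singleton]
      exact Cardinal.one_le_iff_ne_zero.2 (power_ne_zero _ two_ne_zero)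
    · intro C hC
      rw [mem_singleton_iff] at hC; subst hC
      constructor
      · have h1 : tightness ↥(Set.univ : Set X) ≤ #↥(Set.univ : Set X) + ℵ₀ :=
          csInf_le' ⟨self_le_add_left _ _, fun A x hx =>
            ⟨A, subset_rfl, (mk_set_le A).trans (self_le_add_right _ _), hx⟩⟩
        rw [mk_univ] at h1
        exact h1.trans (cantor _).le
      · refine (subset_univ _).antisymm fun x _ => ?_
        refine mem_iUnion.2 ⟨Set.univ, mem_iUnion.2 ⟨⟨subset_rfl, ?_⟩,
          by rw [closure_univ]; trivial⟩⟩
        rw [mk_univ]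
        exact hX.trans (cantor _).le
  have hmem : ℵ₀ ≤ wt X ∧ ∃ 𝒞 : Set (Set X), IsWtWitness (wt X) 𝒞 := csInf_mem hne
  obtain ⟨-, 𝒞, hcov, hcard, hC⟩ := hmem
  have hpow : (2 : Cardinal.{u}) ^ wt X ≤ 2 ^ κ := power_le_power_left two_ne_zero hwt
  refine ⟨𝒞, hcov, hcard.trans hpow, fun C hC' => ?_⟩
  obtain ⟨ht, hclk⟩ := hC C hC'
  have h' := clk_mono (X := X) hpow C
  rw [hclk] at h'
  exact ⟨ht.trans hwt, univ_subset_iff.1 h'⟩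

lemma saturated_spec {𝒞 : Set (Set X)} {κ : Cardinal.{u}} (hw : IsWtWitness κ 𝒞) {A : Set X}
    (hA : Saturated 𝒞 A) {x : X} (hx : x ∈ closure A) :
    ∃ B ⊆ A, #B ≤ κ ∧ x ∈ closure B := by
  obtain ⟨C, hC, hxC⟩ : ∃ C ∈ 𝒞, x ∈ C := by
    have h : x ∈ ⋃₀ 𝒞 := hw.1 ▸ mem_univ x
    exact h
  have hsub : closure A ⊆ closure (A ∩ C) := closure_minimal (hA C hC) isClosed_closure
  set x' : ↥C := ⟨x, hxC⟩ with hx'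
  have hxx : x' ∈ closure ((Subtype.val) ⁻¹' (A ∩ C) : Set ↥C) := by
    rw [closure_subtype, Subtype.image_preimage_coe,
      inter_eq_self_of_subset_right inter_subset_right]
    exact hsub hx
  obtain ⟨B', hB'1, hB'2, hB'3⟩ := tightness_spec ↥C (hw.2.2 C hC).1 _ x' hxx
  refine ⟨Subtype.val '' B', ?_, mk_image_le.trans hB'2, ?_⟩
  · exact ((image_mono hB'1).trans (image_preimage_subset _ _)).trans inter_subset_left
  · exact closure_subtype.1 hB'3

lemma exists_saturated {κ : Cardinal.{u}} (hκ : ℵ₀ ≤ κ) (𝒞 : Set (Set X))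
    (h𝒞card : #𝒞 ≤ 2 ^ κ) (hclk : ∀ C ∈ 𝒞, clk (2 ^ κ) C = Set.univ) (A : Set X) :
    ∃ A' : Set X, A ⊆ A' ∧ Saturated 𝒞 A' ∧ #A' ≤ (#A + 1) * 2 ^ κ := by
  classical
  have h2κ : ℵ₀ ≤ (2 : Cardinal.{u}) ^ κ := hκ.trans (cantor κ).le
  have hκκ : (2 : Cardinal.{u}) ^ κ * 2 ^ κ = 2 ^ κ := by
    rw [← power_add, Cardinal.add_eq_self hκ]
  have hex : ∀ (a : X) (C : Set X), C ∈ 𝒞 → ∃ E : Set X, E ⊆ C ∧ #E ≤ 2 ^ κ ∧ a ∈ closure E := by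
    intro a C hC
    have h : a ∈ clk (2 ^ κ) C := (hclk C hC) ▸ mem_univ a
    simp only [clk, mem_iUnion] at h
    obtain ⟨E, ⟨hE1, hE2⟩, hE3⟩ := h
    exact ⟨E, hE1, hE2, hE3⟩
  choose E hE1 hE2 hE3 using hex
  set step : Set X → Set X := fun A0 => A0 ∪ ⋃ (p : A0 × 𝒞), E p.1.1 p.2.1 p.2.2 with hstep
  have hstep_sub : ∀ A0 : Set X, A0 ⊆ step A0 := fun A0 => subset_union_left
  have hstep_sat : ∀ (A0 : Set X), ∀ a ∈ A0, ∀ C ∈ 𝒞, a ∈ closure (step A0 ∩ C) := by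
    intro A0 a ha C hC
    refine closure_mono (subset_inter ?_ (hE1 a C hC)) (hE3 a C hC)
    exact (subset_iUnion (fun p : A0 × 𝒞 => E p.1.1 p.2.1 p.2.2) ⟨⟨a, ha⟩, ⟨C, hC⟩⟩).trans
      subset_union_right
  have hstep_card : ∀ A0 : Set X, #(step A0) ≤ #A0 + #A0 * (2 ^ κ) * (2 ^ κ) := by
    intro A0
    refine (mk_union_le _ _).trans (add_le_add le_rfl ?_)
    refine (mk_iUnion_le _).trans ?_
    have h1 : #(A0 × 𝒞) ≤ #A0 * (2 ^ κ) := by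
      rw [mk_prod, lift_id, lift_id]
      exact mul_le_mul' le_rfl h𝒞card
    have h2 : ⨆ p : A0 × 𝒞, #(E p.1.1 p.2.1 p.2.2) ≤ 2 ^ κ :=
      ciSup_le' fun p => hE2 p.1.1 p.2.1 p.2.2
    exact mul_le_mul' h1 h2
  set F : ℕ → Set X := fun n => Nat.rec A (fun _ ih => step ih) n with hF
  set μ₀ : Cardinal.{u} := (#A + 1) * 2 ^ κ with hμ₀
  have hμ₀big : (2 : Cardinal.{u}) ^ κ ≤ μ₀ := by
    calc (2:Cardinal.{u}) ^ κ = 1 * 2 ^ κ := (one_mul _).symm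
    _ ≤ (#A + 1) * 2 ^ κ := mul_le_mul' (self_le_add_left _ _) le_rfl
  have hμ₀inf : ℵ₀ ≤ μ₀ := h2κ.trans hμ₀big
  have hμ₀mul : μ₀ * 2 ^ κ = μ₀ := by rw [hμ₀, mul_assoc, hκκ]
  have hcard : ∀ n, #(F n) ≤ μ₀ := by
    intro n
    induction n with
    | zero =>
      calc #(F 0) = #A * 1 := (mul_one _).symm
      _ ≤ (#A + 1) * 2 ^ κ :=
        mul_le_mul' (self_le_add_right _ _) (one_le_aleph0.trans h2κ)
    | succ n ih =>
      have hle : #(F (n+1)) ≤ #(F n) + #(F n) * (2 ^ κ) * (2 ^ κ) := hstep_card (F n)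
      refine hle.trans ?_
      have h1 : #(F n) * (2 ^ κ) * (2 ^ κ) ≤ μ₀ := by
        calc #(F n) * (2 ^ κ) * (2 ^ κ) ≤ μ₀ * (2 ^ κ) * (2 ^ κ) :=
          mul_le_mul' (mul_le_mul' ih le_rfl) le_rfl
        _ = μ₀ := by rw [hμ₀mul, hμ₀mul]
      calc #(F n) + #(F n) * (2 ^ κ) * (2 ^ κ) ≤ μ₀ + μ₀ := add_le_add ih h1
      _ = μ₀ := Cardinal.add_eq_self hμ₀inf
  refine ⟨⋃ n, F n, ?_, ?_, ?_⟩
  · exact subset_iUnion F 0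
  · intro C hC a ha
    obtain ⟨n, hn⟩ := mem_iUnion.1 ha
    have h1 : a ∈ closure (step (F n) ∩ C) := hstep_sat (F n) a hn C hC
    refine closure_mono (inter_subset_inter_left _ ?_) h1
    exact subset_iUnion F (n + 1)
  · have he : (⋃ n, F n) = ⋃ (n : ULift.{u} ℕ), F n.down := by
      apply subset_antisymm
      · exact iUnion_subset fun n => subset_iUnion (fun m : ULift.{u} ℕ => F m.down) ⟨n⟩
      · exact iUnion_subset fun n => subset_iUnion F n.down
    rw [he]
    refine (mk_iUnion_le _).trans ?_
    have h1 : ⨆ n : ULift.{u} ℕ, #(F n.down) ≤ μ₀ := ciSup_le' fun n => hcard n.down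
    have h2 : #(ULift.{u} ℕ) = ℵ₀ := by simp
    calc #(ULift.{u} ℕ) * ⨆ n : ULift.{u} ℕ, #(F n.down) ≤ ℵ₀ * μ₀ := by
          rw [h2]; exact mul_le_mul' le_rfl h1
    _ = μ₀ := by
      exact Cardinal.aleph0_mul_eq hμ₀inf

end Stmt9Aux

/-- Lemma 3.4. -/
theorem stmt9 {X : Type u} [TopologicalSpace X] (D : Set X) (κ : Cardinal.{u})
    (hκ : ℵ₀ ≤ κ) (hwt : wt X ≤ κ) (𝒢 : Set (Set X))
    (hG : ∀ G ∈ 𝒢, GcSet κ G) (hcov : closure D ⊆ ⋃₀ 𝒢) :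
    ∃ 𝒢' ⊆ 𝒢, #𝒢' ≤ #D ^ κ ∧ closure D ⊆ ⋃₀ 𝒢' := by
  classical
  by_cases hDs : D.Subsingleton
  · rcases hDs.eq_empty_or_singleton with rfl | ⟨d, rfl⟩
    · refine ⟨∅, empty_subset _, ?_, ?_⟩
      · simp
      · simp
    · have hd : d ∈ closure ({d} : Set X) := subset_closure rfl
      obtain ⟨G, hG𝒢, hdG⟩ := hcov hd
      obtain ⟨𝒰, -, -, h1, h2⟩ := hG G hG𝒢
      refine ⟨{G}, singleton_subset_iff.2 hG𝒢, ?_, ?_⟩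
      · simp [Cardinal.mk_singleton, one_power]
      · intro x hx
        have hsub : closure ({d} : Set X) ⊆ G := by
          rw [h2]
          refine subset_iInter₂ fun U hU => ?_
          have hdU : d ∈ U := by
            have hmem : d ∈ ⋂₀ 𝒰 := h1 ▸ hdG
            exact hmem U hU
          exact closure_mono (singleton_subset_iff.2 hdU)
        exact ⟨G, rfl, hsub hx⟩
  · rw [Set.not_subsingleton_iff] at hDs
    obtain ⟨a, ha, b, hb, hab⟩ := hDs
    have hμ2 : (2 : Cardinal.{u}) ≤ #D :=
      two_le_iff.2 ⟨⟨a, ha⟩, ⟨b, hb⟩, by simpa using hab⟩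
    set μ : Cardinal.{u} := #D with hμdef
    set lam : Cardinal.{u} := μ ^ κ with hlam
    have hμ0 : μ ≠ 0 := fun h => by simp [h] at hμ2
    have h2κ : ℵ₀ ≤ (2:Cardinal.{u}) ^ κ := hκ.trans (cantor κ).le
    have h2μκ : (2:Cardinal.{u}) ^ κ ≤ lam := power_le_power_right hμ2
    have hlaminf : ℵ₀ ≤ lam := h2κ.trans h2μκ
    have hμlam : μ ≤ lam := by
      conv_lhs => rw [← power_one μ]
      exact power_le_power_left hμ0 (one_le_aleph0.trans hκ)
    have hlamκ : lam ^ κ = lam := by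
      rw [hlam, ← power_mul, Cardinal.mul_eq_self hκ]
    have hlamlam : lam * lam = lam := Cardinal.mul_eq_self hlaminf
    obtain ⟨𝒞, hw⟩ := exists_wtWitness hwt
    obtain ⟨D', hDD', hsat, hD'card⟩ :=
      exists_saturated hκ 𝒞 hw.2.1 (fun C hC => (hw.2.2 C hC).2) D
    have hD'lam : #D' ≤ lam := by
      refine hD'card.trans ?_
      have h1 : μ + 1 ≤ lam := by
        calc μ + 1 ≤ lam + lam := add_le_add hμlam (one_le_aleph0.trans hlaminf)
        _ = lam := Cardinal.add_eq_self hlaminf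
      calc (μ + 1) * 2 ^ κ ≤ lam * lam := mul_le_mul' h1 h2μκ
      _ = lam := hlamlam
    set S₁ : Set (Set X) := {B | B ⊆ D' ∧ #B ≤ κ} with hS₁
    have hS₁card : #S₁ ≤ lam := by
      have h := mk_bounded_subset_le D' κ
      have he : #S₁ = #{t : Set X // t ⊆ D' ∧ #t ≤ κ} := rfl
      rw [he]
      refine h.trans ?_
      calc max #D' ℵ₀ ^ κ ≤ lam ^ κ := power_le_power_right (max_le hD'lam hlaminf)
      _ = lam := hlamκ
    set T : Set (Set (Set X)) := {𝒮 | 𝒮 ⊆ S₁ ∧ #𝒮 ≤ κ} with hT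
    have hTcard : #T ≤ lam := by
      have h := mk_bounded_subset_le S₁ κ
      have he : #T = #{t : Set (Set X) // t ⊆ S₁ ∧ #t ≤ κ} := rfl
      rw [he]
      refine h.trans ?_
      calc max #S₁ ℵ₀ ^ κ ≤ lam ^ κ := power_le_power_right (max_le hS₁card hlaminf)
      _ = lam := hlamκ
    set good : Set (Set (Set X)) := {𝒮 ∈ T | ∃ G ∈ 𝒢, (⋂ B ∈ 𝒮, closure B) ⊆ G} with hgood
    have hchoice : ∀ 𝒮 : good, ∃ G, G ∈ 𝒢 ∧ (⋂ B ∈ (𝒮 : Set (Set X)), closure B) ⊆ G := by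
      rintro ⟨𝒮, -, G, hG1, hG2⟩
      exact ⟨G, hG1, hG2⟩
    choose f hf1 hf2 using hchoice
    refine ⟨range f, ?_, ?_, ?_⟩
    · rintro G' ⟨𝒮, rfl⟩; exact hf1 𝒮
    · refine mk_range_le.trans (le_trans ?_ hTcard)
      exact mk_le_mk_of_subset (sep_subset _ _)
    · intro x hx
      obtain ⟨G, hG𝒢, hxG⟩ := hcov hx
      obtain ⟨𝒰, h𝒰card, h𝒰open, hG1, hG2⟩ := hG G hG𝒢
      have hxD' : x ∈ closure D' := closure_mono hDD' hx
      obtain ⟨B, hBD', hBcard, hxB⟩ := saturated_spec hw hsat hxD'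
      set 𝒮x : Set (Set X) := (fun U => U ∩ B) '' 𝒰 with h𝒮x
      have h𝒮T : 𝒮x ∈ T := by
        constructor
        · rintro B' ⟨U, hU, rfl⟩
          exact ⟨inter_subset_right.trans hBD',
            (mk_le_mk_of_subset inter_subset_right).trans hBcard⟩
        · exact mk_image_le.trans h𝒰card
      have h𝒮P : ∃ G' ∈ 𝒢, (⋂ B' ∈ 𝒮x, closure B') ⊆ G' := by
        refine ⟨G, hG𝒢, fun y hy => ?_⟩
        rw [hG2]
        refine mem_iInter₂.2 fun U hU => ?_
        have hy' := mem_iInter₂.1 hy (U ∩ B) ⟨U, hU, rfl⟩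
        exact closure_mono inter_subset_left hy'
      set s : good := ⟨𝒮x, h𝒮T, h𝒮P⟩ with hs
      refine ⟨f s, mem_range_self s, ?_⟩
      refine hf2 s (mem_iInter₂.2 ?_)
      rintro B' ⟨U, hU, rfl⟩
      have hxU : x ∈ U := by
        have hmem : x ∈ ⋂₀ 𝒰 := hG1 ▸ hxG
        exact hmem U hU
      exact (h𝒰open U hU).inter_closure ⟨hxU, hxB⟩
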